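/- arXiv:1508.01610 — 2 statements merged into one kernel-verified Lean document; each statement's English description precedes it below -/
import Mathlib

section
/- Let p be a prime and K a field of characteristic p. Suppose V ⊆ K[[q]] is a K-subspace with the property that any element of V whose q-expansion vanishes to order greater than b is zero. Then any element of V ⊗_K V ⊆ K[[q1, q2]] all of whose coefficients a(m,n) with m, n ≤ b vanish is zero. -/
open PowerSeries

/-- The index `(m, n)` as an exponent for `K[[q₁, q₂]] = MvPowerSeries (Fin 2) K`. -/
noncomputable def idx (m n : ℕ) : Fin 2 →₀ ℕ := Finsupp.single 0 m + Finsupp.single 1 n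

lemma idx_surj (d : Fin 2 →₀ ℕ) : d = idx (d 0) (d 1) := by
  ext i
  fin_cases i <;> simp [idx]

/-- Let `p` be a prime and `K` a field of characteristic `p`.
Suppose `V ⊆ K[[q]]` is a `K`-subspace such that any element of `V` whose `q`-expansion
vanishes to order greater than `b` is zero.  Then any element of `V ⊗_K V ⊆ K[[q₁, q₂]]`
all of whose coefficients `a(m, n)` with `m, n ≤ b` vanish is zero. -/
theorem tensor_sturm_abstract
    (p : ℕ) (hp : p.Prime) (K : Type*) [Field K] [CharP K p] (b : ℕ)
    (V : Submodule K (PowerSeries K))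
    (hV : ∀ f ∈ V, (∀ n : ℕ, n ≤ b → PowerSeries.coeff n f = 0) → f = 0)
    (F : MvPowerSeries (Fin 2) K)
    (hF : F ∈ Submodule.span K
      {H : MvPowerSeries (Fin 2) K | ∃ f ∈ V, ∃ g ∈ V,
        ∀ m n : ℕ, MvPowerSeries.coeff (idx m n) H =
          PowerSeries.coeff m f * PowerSeries.coeff n g})
    (hvan : ∀ m n : ℕ, m ≤ b → n ≤ b → MvPowerSeries.coeff (idx m n) F = 0) :
    F = 0 := by
  classical
  obtain ⟨N, c, H, hsum⟩ := Submodule.mem_span_set'.mp hF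
  choose f hf g hg hfg using fun i => (H i).2
  -- coefficient formula
  have hcoeff : ∀ m n : ℕ, MvPowerSeries.coeff (idx m n) F =
      ∑ i, c i * (PowerSeries.coeff m (f i) * PowerSeries.coeff n (g i)) := by
    intro m n
    rw [← hsum, map_sum]
    refine Finset.sum_congr rfl fun i _ => ?_
    rw [map_smul, smul_eq_mul, hfg i m n]
  -- Step 1: a(m, n) = 0 for all m, whenever n ≤ b
  have step1 : ∀ n : ℕ, n ≤ b → ∀ m : ℕ, MvPowerSeries.coeff (idx m n) F = 0 := by
    intro n hn m
    set h : PowerSeries K := ∑ i, (c i * PowerSeries.coeff n (g i)) • f i with hh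
    have hmem : h ∈ V := Submodule.sum_mem V fun i _ => Submodule.smul_mem V _ (hf i)
    have hch : ∀ m : ℕ, PowerSeries.coeff m h = MvPowerSeries.coeff (idx m n) F := by
      intro m
      rw [hcoeff m n, hh, map_sum]
      refine Finset.sum_congr rfl fun i _ => ?_
      rw [map_smul, smul_eq_mul]; ring
    have h0 : h = 0 := hV h hmem fun m hm => by rw [hch m]; exact hvan m n hm hn
    rw [← hch m, h0, map_zero]
  -- Step 2: a(m, n) = 0 for all m, n
  have step2 : ∀ m n : ℕ, MvPowerSeries.coeff (idx m n) F = 0 := by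
    intro m n
    set k : PowerSeries K := ∑ i, (c i * PowerSeries.coeff m (f i)) • g i with hk
    have hmem : k ∈ V := Submodule.sum_mem V fun i _ => Submodule.smul_mem V _ (hg i)
    have hck : ∀ n : ℕ, PowerSeries.coeff n k = MvPowerSeries.coeff (idx m n) F := by
      intro n
      rw [hcoeff m n, hk, map_sum]
      refine Finset.sum_congr rfl fun i _ => ?_
      rw [map_smul, smul_eq_mul]; ring
    have k0 : k = 0 := hV k hmem fun n hn => by rw [hck n]; exact step1 n hn m
    rw [← hck n, k0, map_zero]
  ext d
  rw [map_zero, idx_surj d]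
  exact step2 (d 0) (d 1)
end

section
/- The monomials x12^i y12^j, for x12 = Δ ⊗ Δ and y12 = e4^3 ⊗ Δ + Δ ⊗ e4^3 reduced modulo a prime p, are F_p-linearly independent: the reductions of x12 and y12 are algebraically independent over F_p. Equivalently, the leading term (in the order q1^m q12^r q2^n ordered lexicographically in (m,n,r)) of x12^i y12^j is q1^i q2^{i+j}. -/
open PowerSeries ArithmeticFunction

/-- The image of `f ⊗ g` in `K[[q₁, q₂]]` under `q ⊗ 1 ↦ q₁`, `1 ⊗ q ↦ q₂`. -/
noncomputable def twoVar {K : Type*} [CommSemiring K] (f g : PowerSeries K) :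
    MvPowerSeries (Fin 2) K :=
  fun d => PowerSeries.coeff (d 0) f * PowerSeries.coeff (d 1) g


lemma idx_apply_zero (m n : ℕ) : idx m n 0 = m := by simp [idx, Finsupp.single_apply]

lemma idx_apply_one (m n : ℕ) : idx m n 1 = n := by simp [idx, Finsupp.single_apply]

lemma idx_eq (u : Fin 2 →₀ ℕ) : idx (u 0) (u 1) = u := by
  ext i
  fin_cases i <;> simp [idx, Finsupp.single_apply]

lemma coeff_twoVar {K : Type*} [CommSemiring K] (f g : PowerSeries K) (d : Fin 2 →₀ ℕ) :
    MvPowerSeries.coeff d (twoVar f g) =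
      PowerSeries.coeff (d 0) f * PowerSeries.coeff (d 1) g := rfl

lemma twoVar_mul {K : Type*} [CommSemiring K] (f g f' g' : PowerSeries K) :
    twoVar f g * twoVar f' g' = twoVar (f * f') (g * g') := by
  apply MvPowerSeries.ext
  intro d
  rw [MvPowerSeries.coeff_mul, coeff_twoVar, PowerSeries.coeff_mul, PowerSeries.coeff_mul,
    Finset.sum_mul_sum]
  rw [← Finset.sum_product']
  refine Finset.sum_nbij' (fun uv => ((uv.1 0, uv.2 0), (uv.1 1, uv.2 1)))
    (fun ab => (idx ab.1.1 ab.2.1, idx ab.1.2 ab.2.2)) ?_ ?_ ?_ ?_ ?_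
  · rintro ⟨u, v⟩ h
    rw [Finset.HasAntidiagonal.mem_antidiagonal] at h
    simp only [Finset.mem_product, Finset.HasAntidiagonal.mem_antidiagonal]
    constructor
    · rw [← h]; simp
    · rw [← h]; simp
  · rintro ⟨⟨a, b⟩, ⟨c, e⟩⟩ h
    simp only [Finset.mem_product, Finset.HasAntidiagonal.mem_antidiagonal] at h
    rw [Finset.HasAntidiagonal.mem_antidiagonal]
    ext i
    fin_cases i <;> simp [idx, Finsupp.single_apply, h.1, h.2]
  · rintro ⟨u, v⟩ _
    simp [idx_eq]
  · rintro ⟨⟨a, b⟩, ⟨c, e⟩⟩ _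
    simp [idx_apply_zero, idx_apply_one]
  · rintro ⟨u, v⟩ _
    simp only [coeff_twoVar]
    ring

lemma twoVar_one {K : Type*} [CommSemiring K] : (twoVar 1 1 : MvPowerSeries (Fin 2) K) = 1 := by
  apply MvPowerSeries.ext
  intro d
  rw [coeff_twoVar, MvPowerSeries.coeff_one, PowerSeries.coeff_one, PowerSeries.coeff_one]
  by_cases h : d = 0
  · simp [h]
  · have : ¬(d 0 = 0 ∧ d 1 = 0) := by
      intro ⟨h0, h1⟩
      apply h
      ext i; fin_cases i <;> simp [h0, h1]
    simp only [h, if_neg h]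
    rcases not_and_or.mp this with h' | h' <;> simp [h']

lemma twoVar_pow {K : Type*} [CommSemiring K] (f g : PowerSeries K) (n : ℕ) :
    (twoVar f g) ^ n = twoVar (f ^ n) (g ^ n) := by
  induction n with
  | zero => simp only [pow_zero]; exact twoVar_one.symm
  | succ n ih => rw [pow_succ, pow_succ, pow_succ, ih, twoVar_mul]

lemma coeff_DE_zero {K : Type*} [CommRing K] (Δp Ep : PowerSeries K)
    (h0 : PowerSeries.coeff 0 Δp = 0)
    (a b m : ℕ) (hm : m < a) : PowerSeries.coeff m (Δp ^ a * Ep ^ b) = 0 := by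
  have hdvd : (X : PowerSeries K) ^ a ∣ Δp ^ a * Ep ^ b :=
    Dvd.dvd.mul_right (pow_dvd_pow_of_dvd (PowerSeries.X_dvd_iff.mpr (by simpa using h0)) a) _
  exact (PowerSeries.X_pow_dvd_iff.mp hdvd) m hm

lemma coeff_DE_lead {K : Type*} [CommRing K] (Δp Ep : PowerSeries K)
    (h0 : PowerSeries.coeff 0 Δp = 0) (h1 : PowerSeries.coeff 1 Δp = 1)
    (hE : PowerSeries.coeff 0 Ep = 1)
    (a b : ℕ) : PowerSeries.coeff a (Δp ^ a * Ep ^ b) = 1 := by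
  obtain ⟨D, hD⟩ := PowerSeries.X_dvd_iff.mpr (by simpa using h0)
  have hD0 : PowerSeries.coeff 0 D = 1 := by
    have := h1
    rw [hD] at this
    simpa [PowerSeries.coeff_succ_X_mul] using this
  have : Δp ^ a * Ep ^ b = X ^ a * (D ^ a * Ep ^ b) := by rw [hD]; ring
  rw [this]
  have h2 := PowerSeries.coeff_X_pow_mul (D ^ a * Ep ^ b) a 0
  rw [zero_add] at h2
  rw [h2]
  simp only [PowerSeries.coeff_zero_eq_constantCoeff, map_mul, map_pow]
  rw [← PowerSeries.coeff_zero_eq_constantCoeff] at *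
  rw [hD0, hE]
  simp

lemma xy_expand {K : Type*} [CommRing K] (Δp Ep : PowerSeries K) (i j : ℕ) (d : Fin 2 →₀ ℕ) :
    MvPowerSeries.coeff d
      ((twoVar Δp Δp) ^ i * (twoVar Ep Δp + twoVar Δp Ep) ^ j) =
    ∑ k ∈ Finset.range (j + 1), (j.choose k) •
      (PowerSeries.coeff (d 0) (Δp ^ (i + (j - k)) * Ep ^ k) *
       PowerSeries.coeff (d 1) (Δp ^ (i + k) * Ep ^ (j - k))) := by
  rw [add_pow, Finset.mul_sum, map_sum]
  refine Finset.sum_congr rfl fun k hk => ?_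
  rw [Finset.mem_range, Nat.lt_succ_iff] at hk
  rw [twoVar_pow, twoVar_pow, twoVar_pow, twoVar_mul]
  have e1 : Δp ^ i * (Ep ^ k * Δp ^ (j - k)) = Δp ^ (i + (j - k)) * Ep ^ k := by
    rw [pow_add]; ring
  have e2 : Δp ^ i * (Δp ^ k * Ep ^ (j - k)) = Δp ^ (i + k) * Ep ^ (j - k) := by
    rw [pow_add]; ring
  have e3 : twoVar (Δp ^ i) (Δp ^ i) *
      (twoVar (Ep ^ k * Δp ^ (j - k)) (Δp ^ k * Ep ^ (j - k)) *
        (j.choose k : MvPowerSeries (Fin 2) K)) =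
      (j.choose k : MvPowerSeries (Fin 2) K) *
      (twoVar (Δp ^ i) (Δp ^ i) * twoVar (Ep ^ k * Δp ^ (j - k)) (Δp ^ k * Ep ^ (j - k))) := by
    ring
  rw [e3, twoVar_mul, e1, e2, ← nsmul_eq_mul, map_nsmul, coeff_twoVar]

section KeyLemmas

variable {K : Type*} [CommRing K] (Δp Ep : PowerSeries K)
  (h0 : PowerSeries.coeff 0 Δp = 0) (h1 : PowerSeries.coeff 1 Δp = 1)
  (hE : PowerSeries.coeff 0 Ep = 1)

include h0 h1 hE in
lemma xy_lead (i j : ℕ) :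
    MvPowerSeries.coeff (idx i (i + j))
      ((twoVar Δp Δp) ^ i * (twoVar Ep Δp + twoVar Δp Ep) ^ j) = 1 := by
  rw [xy_expand]
  rw [Finset.sum_eq_single_of_mem j (Finset.self_mem_range_succ j)]
  · rw [idx_apply_zero, idx_apply_one, Nat.sub_self, Nat.add_zero,
      coeff_DE_lead Δp Ep h0 h1 hE i j, coeff_DE_lead Δp Ep h0 h1 hE (i + j) 0]
    simp
  · intro k hk hkj
    rw [Finset.mem_range, Nat.lt_succ_iff] at hk
    have : i < i + (j - k) := by omega
    rw [idx_apply_zero, coeff_DE_zero Δp Ep h0 _ _ _ this, zero_mul, smul_zero]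

include h0 hE in
omit h1 in
lemma xy_vanish (i j m n : ℕ) (h : m < i ∨ (m = i ∧ n < i + j)) :
    MvPowerSeries.coeff (idx m n)
      ((twoVar Δp Δp) ^ i * (twoVar Ep Δp + twoVar Δp Ep) ^ j) = 0 := by
  rw [xy_expand]
  refine Finset.sum_eq_zero fun k hk => ?_
  rw [Finset.mem_range, Nat.lt_succ_iff] at hk
  rw [idx_apply_zero, idx_apply_one]
  rcases h with h | ⟨rfl, hn⟩
  · rw [coeff_DE_zero Δp Ep h0 _ _ _ (by omega), zero_mul, smul_zero]
  · rcases Nat.lt_or_ge k j with hkj | hkj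
    · rw [coeff_DE_zero Δp Ep h0 _ _ _ (by omega), zero_mul, smul_zero]
    · have hkj' : k = j := le_antisymm hk hkj
      subst hkj'
      rw [coeff_DE_zero Δp Ep h0 _ _ n (by omega), mul_zero, smul_zero]

include h0 h1 hE in
lemma key_algind [Nontrivial K] : AlgebraicIndependent K
    ![twoVar Δp Δp, twoVar Ep Δp + twoVar Δp Ep] := by
  rw [algebraicIndependent_iff]
  intro P hP
  by_contra hP0
  have hsupp : P.support.Nonempty := MvPolynomial.support_nonempty.mpr hP0
  obtain ⟨d, hd, hmin⟩ := Finset.exists_min_image P.support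
    (fun e => toLex (e 0, e 0 + e 1)) hsupp
  have hev : MvPolynomial.aeval ![twoVar Δp Δp, twoVar Ep Δp + twoVar Δp Ep] P =
      ∑ e ∈ P.support, MvPolynomial.coeff e P •
        ((twoVar Δp Δp) ^ e 0 * (twoVar Ep Δp + twoVar Δp Ep) ^ e 1) := by
    rw [MvPolynomial.aeval_def, MvPolynomial.eval₂_eq']
    refine Finset.sum_congr rfl fun e _ => ?_
    rw [Algebra.smul_def, Fin.prod_univ_two]
    simp [Matrix.cons_val_zero, Matrix.cons_val_one]
  have h2 : (MvPowerSeries.coeff (idx (d 0) (d 0 + d 1)))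
      (∑ e ∈ P.support, MvPolynomial.coeff e P •
        ((twoVar Δp Δp) ^ e 0 * (twoVar Ep Δp + twoVar Δp Ep) ^ e 1)) = 0 := by
    rw [← hev, hP]
    exact map_zero _
  rw [map_sum] at h2
  rw [Finset.sum_eq_single_of_mem d hd] at h2
  · rw [map_smul, xy_lead Δp Ep h0 h1 hE (d 0) (d 1), smul_eq_mul, mul_one] at h2
    exact (MvPolynomial.mem_support_iff.mp hd) h2
  · intro e he hne
    rw [map_smul, xy_vanish Δp Ep h0 hE (e 0) (e 1) (d 0) (d 0 + d 1) ?_, smul_zero]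
    have hle := hmin e he
    have hne' : toLex (d 0, d 0 + d 1) ≠ toLex (e 0, e 0 + e 1) := by
      intro hEq
      apply hne
      have h3 : (d 0, d 0 + d 1) = (e 0, e 0 + e 1) := hEq
      have hd0 : d 0 = e 0 := congrArg Prod.fst h3
      have hd1 : d 1 = e 1 := by
        have := congrArg Prod.snd h3
        simp only at this
        omega
      ext i
      fin_cases i
      · exact hd0.symm
      · exact hd1.symm
    have hlt := lt_of_le_of_ne hle hne'
    rw [Prod.Lex.lt_iff] at hlt
    simpa using hlt

end KeyLemmas

lemma delta_coeffs (E4 E6 Δ : PowerSeries ℤ)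
    (hE4 : ∀ n : ℕ, PowerSeries.coeff n E4 =
      if n = 0 then 1 else 240 * (ArithmeticFunction.sigma 3 n : ℤ))
    (hE6 : ∀ n : ℕ, PowerSeries.coeff n E6 =
      if n = 0 then 1 else -504 * (ArithmeticFunction.sigma 5 n : ℤ))
    (hΔ : PowerSeries.map (Int.castRingHom ℚ) Δ =
      ((2 : ℚ)^6 * 3^3)⁻¹ • ((PowerSeries.map (Int.castRingHom ℚ) E4) ^ 3 -
        (PowerSeries.map (Int.castRingHom ℚ) E6) ^ 2)) :
    PowerSeries.coeff 0 Δ = 0 ∧ PowerSeries.coeff 1 Δ = 1 := by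
  have c40 : PowerSeries.coeff 0 E4 = 1 := by rw [hE4]; simp
  have c41 : PowerSeries.coeff 1 E4 = 240 := by
    rw [hE4]; simp [ArithmeticFunction.sigma_apply]
  have c60 : PowerSeries.coeff 0 E6 = 1 := by rw [hE6]; simp
  have c61 : PowerSeries.coeff 1 E6 = -504 := by
    rw [hE6]; simp [ArithmeticFunction.sigma_apply]
  have key : ∀ n : ℕ, ((PowerSeries.coeff n Δ : ℤ) : ℚ) =
      ((2:ℚ)^6*3^3)⁻¹ * (PowerSeries.coeff n ((PowerSeries.map (Int.castRingHom ℚ) E4) ^ 3)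
        - PowerSeries.coeff n ((PowerSeries.map (Int.castRingHom ℚ) E6) ^ 2)) := by
    intro n
    have := congrArg (PowerSeries.coeff n) hΔ
    rw [PowerSeries.coeff_map] at this
    rw [map_smul, map_sub] at this
    simpa [smul_eq_mul] using this
  have coeff1_mul : ∀ (f g : PowerSeries ℚ), PowerSeries.coeff 1 (f * g) =
      PowerSeries.coeff 0 f * PowerSeries.coeff 1 g +
      PowerSeries.coeff 1 f * PowerSeries.coeff 0 g := by
    intro f g
    rw [PowerSeries.coeff_mul]
    rw [show Finset.HasAntidiagonal.antidiagonal 1 = {(0,1),(1,0)} from rfl]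
    simp
  have q40 : PowerSeries.coeff 0 (PowerSeries.map (Int.castRingHom ℚ) E4) = 1 := by
    rw [PowerSeries.coeff_map, c40]; simp
  have q41 : PowerSeries.coeff 1 (PowerSeries.map (Int.castRingHom ℚ) E4) = 240 := by
    rw [PowerSeries.coeff_map, c41]; simp
  have q60 : PowerSeries.coeff 0 (PowerSeries.map (Int.castRingHom ℚ) E6) = 1 := by
    rw [PowerSeries.coeff_map, c60]; simp
  have q61 : PowerSeries.coeff 1 (PowerSeries.map (Int.castRingHom ℚ) E6) = -504 := by
    rw [PowerSeries.coeff_map, c61]; simp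
  constructor
  · have := key 0
    simp only [PowerSeries.coeff_zero_eq_constantCoeff, map_pow] at this
    rw [← PowerSeries.coeff_zero_eq_constantCoeff] at this
    rw [show PowerSeries.constantCoeff (PowerSeries.map (Int.castRingHom ℚ) E4) = 1 by
        rw [← PowerSeries.coeff_zero_eq_constantCoeff]; exact q40,
      show PowerSeries.constantCoeff (PowerSeries.map (Int.castRingHom ℚ) E6) = 1 by
        rw [← PowerSeries.coeff_zero_eq_constantCoeff]; exact q60] at this
    have h4 : ((PowerSeries.coeff 0 Δ : ℤ) : ℚ) = 0 := by rw [this]; norm_num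
    exact_mod_cast h4
  · have := key 1
    rw [show ((PowerSeries.map (Int.castRingHom ℚ)) E4) ^ 3
        = (PowerSeries.map (Int.castRingHom ℚ) E4) * (PowerSeries.map (Int.castRingHom ℚ) E4)
          * (PowerSeries.map (Int.castRingHom ℚ) E4) by ring,
      show ((PowerSeries.map (Int.castRingHom ℚ)) E6) ^ 2
        = (PowerSeries.map (Int.castRingHom ℚ) E6) * (PowerSeries.map (Int.castRingHom ℚ) E6)
        by ring,
      coeff1_mul, coeff1_mul, coeff1_mul] at this
    rw [PowerSeries.coeff_zero_eq_constantCoeff, map_mul,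
      ← PowerSeries.coeff_zero_eq_constantCoeff] at this
    rw [q40, q41, q60, q61] at this
    have h4 : ((PowerSeries.coeff 1 Δ : ℤ) : ℚ) = 1 := by rw [this]; norm_num
    exact_mod_cast h4

/-- The reductions mod a prime `p` of `x₁₂ = Δ ⊗ Δ` and
`y₁₂ = e₄³ ⊗ Δ + Δ ⊗ e₄³` are algebraically independent over `𝔽_p`; equivalently, the
leading term of `x₁₂^i y₁₂^j` (in the lexicographic order on `(m, n)`) is `q₁^i q₂^{i+j}`. -/
theorem x12_y12_algebraically_independent
    (p : ℕ) (hp : p.Prime)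
    (E4 E6 Δ : PowerSeries ℤ)
    (hE4 : ∀ n : ℕ, PowerSeries.coeff n E4 =
      if n = 0 then 1 else 240 * (ArithmeticFunction.sigma 3 n : ℤ))
    (hE6 : ∀ n : ℕ, PowerSeries.coeff n E6 =
      if n = 0 then 1 else -504 * (ArithmeticFunction.sigma 5 n : ℤ))
    (hΔ : PowerSeries.map (Int.castRingHom ℚ) Δ =
      ((2 : ℚ)^6 * 3^3)⁻¹ • ((PowerSeries.map (Int.castRingHom ℚ) E4) ^ 3 -
        (PowerSeries.map (Int.castRingHom ℚ) E6) ^ 2)) :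
    AlgebraicIndependent (ZMod p)
      ![twoVar (PowerSeries.map (Int.castRingHom (ZMod p)) Δ)
          (PowerSeries.map (Int.castRingHom (ZMod p)) Δ),
        twoVar (PowerSeries.map (Int.castRingHom (ZMod p)) (E4 ^ 3))
          (PowerSeries.map (Int.castRingHom (ZMod p)) Δ) +
        twoVar (PowerSeries.map (Int.castRingHom (ZMod p)) Δ)
          (PowerSeries.map (Int.castRingHom (ZMod p)) (E4 ^ 3))] ∧
    ∀ i j : ℕ,
      MvPowerSeries.coeff (idx i (i + j))
        ((twoVar (PowerSeries.map (Int.castRingHom (ZMod p)) Δ)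
            (PowerSeries.map (Int.castRingHom (ZMod p)) Δ)) ^ i *
          (twoVar (PowerSeries.map (Int.castRingHom (ZMod p)) (E4 ^ 3))
              (PowerSeries.map (Int.castRingHom (ZMod p)) Δ) +
            twoVar (PowerSeries.map (Int.castRingHom (ZMod p)) Δ)
              (PowerSeries.map (Int.castRingHom (ZMod p)) (E4 ^ 3))) ^ j) = 1 ∧
      ∀ m n : ℕ, (m < i ∨ (m = i ∧ n < i + j)) →
        MvPowerSeries.coeff (idx m n)
          ((twoVar (PowerSeries.map (Int.castRingHom (ZMod p)) Δ)
              (PowerSeries.map (Int.castRingHom (ZMod p)) Δ)) ^ i *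
            (twoVar (PowerSeries.map (Int.castRingHom (ZMod p)) (E4 ^ 3))
                (PowerSeries.map (Int.castRingHom (ZMod p)) Δ) +
              twoVar (PowerSeries.map (Int.castRingHom (ZMod p)) Δ)
                (PowerSeries.map (Int.castRingHom (ZMod p)) (E4 ^ 3))) ^ j) = 0 := by

  haveI : Fact p.Prime := ⟨hp⟩
  obtain ⟨hΔ0, hΔ1⟩ := delta_coeffs E4 E6 Δ hE4 hE6 hΔ
  set Δp := PowerSeries.map (Int.castRingHom (ZMod p)) Δ with hΔp
  set Ep := PowerSeries.map (Int.castRingHom (ZMod p)) (E4 ^ 3) with hEp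
  have h0 : PowerSeries.coeff 0 Δp = 0 := by
    rw [hΔp, PowerSeries.coeff_map, hΔ0]; simp
  have h1 : PowerSeries.coeff 1 Δp = 1 := by
    rw [hΔp, PowerSeries.coeff_map, hΔ1]; simp
  have hE : PowerSeries.coeff 0 Ep = 1 := by
    have c40 : PowerSeries.coeff 0 E4 = 1 := by rw [hE4]; simp
    have : PowerSeries.coeff 0 (E4 ^ 3) = 1 := by
      rw [PowerSeries.coeff_zero_eq_constantCoeff, map_pow,
        ← PowerSeries.coeff_zero_eq_constantCoeff, c40]
      norm_num
    rw [hEp, PowerSeries.coeff_map, this]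
    simp
  exact ⟨key_algind Δp Ep h0 h1 hE,
    fun i j => ⟨xy_lead Δp Ep h0 h1 hE i j,
      fun m n h => xy_vanish Δp Ep h0 hE i j m n h⟩⟩
end
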